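/- In the single-sequence energy-harvesting problem, any throughput-maximizing feasible power sequence P* has the property that whenever the power changes between consecutive epochs, the energy causality constraint is active at the change instant: for every i with 1 ≤ i ≤ K, if P*ⁱ ≠ P*^{i+1} then Σ_{j=1}^i P*ʲ lʲ = Σ_{j=0}^{i−1} Eʲ, i.e., all energy harvested before epoch i+1 has been completely consumed by time tⁱ. -/

import Mathlib

/-- `g(x) = (1/2) log(1 + K₀ x)` (natural logarithm). -/
noncomputable def gfun (K0 x : ℝ) : ℝ := Real.log (1 + K0 * x) / 2

/-- Feasibility in the single-sequence energy-harvesting problem. -/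
def SFeas (K : ℕ) (t E P : ℕ → ℝ) : Prop :=
  (∀ i, 1 ≤ i → i ≤ K + 1 → 0 ≤ P i) ∧
  (∀ k, 1 ≤ k → k ≤ K + 1 →
    ∑ i ∈ Finset.Icc 1 k, P i * (t i - t (i - 1)) ≤ ∑ j ∈ Finset.range k, E j)

/-- The throughput `Σ_{i=1}^{K+1} lⁱ g(Pⁱ)`. -/
noncomputable def SThroughput (K0 : ℝ) (K : ℕ) (t P : ℕ → ℝ) : ℝ :=
  ∑ i ∈ Finset.Icc 1 (K + 1), (t i - t (i - 1)) * gfun K0 (P i)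

/-- Slopes of `gfun` are strictly decreasing (strict concavity on `[0, ∞)`). -/
lemma gslope {K0 : ℝ} (hK0 : 0 < K0) {x y z : ℝ} (hx : 0 ≤ x) (hxy : x < y) (hyz : y < z) :
    (gfun K0 z - gfun K0 y) / (z - y) < (gfun K0 y - gfun K0 x) / (y - x) := by
  have hu : (0:ℝ) < 1 + K0 * x := by nlinarith
  have huv : 1 + K0 * x < 1 + K0 * y := by nlinarith
  have hvw : 1 + K0 * y < 1 + K0 * z := by nlinarith
  have h := strictConcaveOn_log_Ioi.slope_anti_adjacent (Set.mem_Ioi.mpr hu)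
      (Set.mem_Ioi.mpr (hu.trans (huv.trans hvw))) huv hvw
  have hxy' : (0:ℝ) < y - x := by linarith
  have hyz' : (0:ℝ) < z - y := by linarith
  have h' := (div_lt_div_iff₀ (by linarith) (by linarith)).mp h
  unfold gfun
  rw [div_lt_div_iff₀ hyz' hxy']
  nlinarith [h', hK0]

/-- Key strict improvement lemma: shifting energy from the higher power to the
lower power strictly increases throughput. -/
lemma key {K0 : ℝ} (hK0 : 0 < K0) {la lb x y ea eb : ℝ} (hla : 0 < la) (hlb : 0 < lb)
    (hx : 0 ≤ x) (hea : 0 < ea) (heb : 0 < eb) (hord : x + ea < y - eb)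
    (hbal : la * ea = lb * eb) :
    la * gfun K0 x + lb * gfun K0 y < la * gfun K0 (x + ea) + lb * gfun K0 (y - eb) := by
  have h1 := gslope hK0 hx (lt_add_of_pos_right x hea) hord
  have h2 := gslope hK0 (by linarith : (0:ℝ) ≤ x + ea) hord (by linarith : y - eb < y)
  have hs : (gfun K0 y - gfun K0 (y - eb)) / (y - (y - eb))
      < (gfun K0 (x + ea) - gfun K0 x) / (x + ea - x) := h2.trans h1
  have e1 : y - (y - eb) = eb := by ring
  have e2 : x + ea - x = ea := by ring
  rw [e1, e2] at hs
  have h := (div_lt_div_iff₀ heb hea).mp hs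
  have h3 : lb * eb * (gfun K0 y - gfun K0 (y - eb))
      < la * eb * (gfun K0 (x + ea) - gfun K0 x) := by
    calc lb * eb * (gfun K0 y - gfun K0 (y - eb))
        = la * ea * (gfun K0 y - gfun K0 (y - eb)) := by rw [hbal]
      _ = la * ((gfun K0 y - gfun K0 (y - eb)) * ea) := by ring
      _ < la * ((gfun K0 (x + ea) - gfun K0 x) * eb) := mul_lt_mul_of_pos_left h hla
      _ = la * eb * (gfun K0 (x + ea) - gfun K0 x) := by ring
  have h4 : lb * (gfun K0 y - gfun K0 (y - eb)) < la * (gfun K0 (x + ea) - gfun K0 x) := by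
    have := (mul_lt_mul_iff_of_pos_right heb).mp
      (show lb * (gfun K0 y - gfun K0 (y - eb)) * eb
          < la * (gfun K0 (x + ea) - gfun K0 x) * eb by linarith [h3])
    exact this
  linarith [h4]

lemma sum_diff_one {s : Finset ℕ} {i : ℕ} (hi : i ∈ s) (f g : ℕ → ℝ)
    (h : ∀ j ∈ s, j ≠ i → f j = g j) :
    ∑ j ∈ s, f j = ∑ j ∈ s, g j + (f i - g i) := by
  rw [← Finset.add_sum_erase s f hi, ← Finset.add_sum_erase s g hi]
  have he : ∑ j ∈ s.erase i, f j = ∑ j ∈ s.erase i, g j :=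
    Finset.sum_congr rfl fun j hj =>
      h j (Finset.mem_of_mem_erase hj) (Finset.ne_of_mem_erase hj)
  rw [he]; ring

lemma sum_diff_two {s : Finset ℕ} {i k : ℕ} (hik : i ≠ k) (hi : i ∈ s) (hk : k ∈ s)
    (f g : ℕ → ℝ) (h : ∀ j ∈ s, j ≠ i → j ≠ k → f j = g j) :
    ∑ j ∈ s, f j = ∑ j ∈ s, g j + (f i - g i) + (f k - g k) := by
  rw [← Finset.add_sum_erase s f hi, ← Finset.add_sum_erase s g hi]
  have hk' : k ∈ s.erase i := Finset.mem_erase.mpr ⟨fun hc => hik hc.symm, hk⟩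
  rw [sum_diff_one hk' f g fun j hj hjk =>
    h j (Finset.mem_of_mem_erase hj) (Finset.ne_of_mem_erase hj) hjk]
  ring

/-- Lemma 3 of the paper (with the Corollary after Lemma 2): in an optimal
policy, whenever the power changes between consecutive epochs `i` and `i+1`,
the energy causality constraint is active at `tⁱ`, i.e. all the energy
harvested before epoch `i+1` has been completely consumed by time `tⁱ`. -/
theorem power_changes_only_when_constraint_active (K0 : ℝ) (hK0 : 0 < K0)
    (K : ℕ) (t : ℕ → ℝ) (ht0 : t 0 = 0) (htmono : ∀ i, i ≤ K → t i < t (i + 1))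
    (E : ℕ → ℝ) (hE0 : 0 < E 0) (hE : ∀ j, 1 ≤ j → j ≤ K → 0 ≤ E j)
    (Pstar : ℕ → ℝ) (hfeas : SFeas K t E Pstar)
    (hopt : ∀ Q : ℕ → ℝ, SFeas K t E Q →
      SThroughput K0 K t Q ≤ SThroughput K0 K t Pstar) :
    ∀ i, 1 ≤ i → i ≤ K → Pstar i ≠ Pstar (i + 1) →
      ∑ j ∈ Finset.Icc 1 i, Pstar j * (t j - t (j - 1)) = ∑ j ∈ Finset.range i, E j := by
  intro i hi1 hiK hne
  by_contra hne2
  -- positive epoch lengths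
  have hl : ∀ j, 1 ≤ j → j ≤ K + 1 → 0 < t j - t (j - 1) := by
    intro j hj1 hjK
    have := htmono (j - 1) (by omega)
    have hj : j - 1 + 1 = j := by omega
    rw [hj] at this; linarith
  have hii : (i + 1 : ℕ) - 1 = i := by omega
  set li := t i - t (i - 1) with hli_def
  have hli : 0 < li := hl i hi1 (by omega)
  have hli1' : 0 < t (i + 1) - t (i + 1 - 1) := hl (i + 1) (by omega) (by omega)
  rw [hii] at hli1'
  set li1 := t (i + 1) - t i with hli1_def
  have hli1 : 0 < li1 := hli1'
  -- strict slack
  have hslack : ∑ j ∈ Finset.Icc 1 i, Pstar j * (t j - t (j - 1)) < ∑ j ∈ Finset.range i, E j :=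
    lt_of_le_of_ne (hfeas.2 i hi1 (by omega)) hne2
  set sl := ∑ j ∈ Finset.range i, E j - ∑ j ∈ Finset.Icc 1 i, Pstar j * (t j - t (j - 1))
    with hsl_def
  have hsl : 0 < sl := by simp only [hsl_def]; linarith
  set a := Pstar i with ha_def
  set b := Pstar (i + 1) with hb_def
  have ha : 0 ≤ a := hfeas.1 i hi1 (by omega)
  have hb : 0 ≤ b := hfeas.1 (i + 1) (by omega) (by omega)
  set gap := |a - b| with hgap_def
  have hgap : 0 < gap := abs_pos.mpr (sub_ne_zero.mpr hne)
  set m := min li li1 with hm_def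
  have hm : 0 < m := lt_min hli hli1
  set ε := min sl (gap * m / 4) with hε_def
  have hε : 0 < ε := lt_min hsl (by positivity)
  have hεsl : ε ≤ sl := min_le_left _ _
  set da := ε / li with hda_def
  set db := ε / li1 with hdb_def
  have hda : 0 < da := div_pos hε hli
  have hdb : 0 < db := div_pos hε hli1
  have hbala : li * da = ε := by rw [hda_def]; field_simp
  have hbalb : li1 * db = ε := by rw [hdb_def]; field_simp
  have hda4 : da ≤ gap / 4 := by
    rw [hda_def, div_le_div_iff₀ hli (by norm_num)]
    calc ε * 4 ≤ gap * m / 4 * 4 := by linarith [min_le_right sl (gap * m / 4)]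
      _ = gap * m := by ring
      _ ≤ gap * li := by nlinarith [min_le_left li li1]
  have hdb4 : db ≤ gap / 4 := by
    rw [hdb_def, div_le_div_iff₀ hli1 (by norm_num)]
    calc ε * 4 ≤ gap * m / 4 * 4 := by linarith [min_le_right sl (gap * m / 4)]
      _ = gap * m := by ring
      _ ≤ gap * li1 := by nlinarith [min_le_right li li1]
  rcases hne.lt_or_gt with hab | hab
  · -- a < b : move ε of energy from epoch i+1 to epoch i
    have hgab : gap = b - a := by rw [hgap_def, abs_of_neg (by linarith : a - b < 0)]; ring
    set Q : ℕ → ℝ := fun j => if j = i then a + da else if j = i + 1 then b - db else Pstar j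
      with hQ_def
    have hQi : Q i = a + da := by simp [hQ_def]
    have hQi1 : Q (i + 1) = b - db := by simp [hQ_def]
    have hQo : ∀ j, j ≠ i → j ≠ i + 1 → Q j = Pstar j := by
      intro j h1 h2; simp [hQ_def, h1, h2]
    have hord : a + da < b - db := by rw [hgab] at hda4 hdb4; linarith
    have hQfeas : SFeas K t E Q := by
      constructor
      · intro j hj1 hjK
        by_cases h1 : j = i
        · rw [h1, hQi]; linarith
        by_cases h2 : j = i + 1
        · rw [h2, hQi1]
          have hgb : gap ≤ b := by rw [hgab]; linarith
          rw [hgab] at hdb4; linarith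
        · rw [hQo j h1 h2]; exact hfeas.1 j hj1 hjK
      · intro k hk1 hkK
        rcases lt_trichotomy k i with hki | hki | hki
        · have heq : ∑ j ∈ Finset.Icc 1 k, Q j * (t j - t (j - 1))
              = ∑ j ∈ Finset.Icc 1 k, Pstar j * (t j - t (j - 1)) := by
            apply Finset.sum_congr rfl
            intro j hj
            have hj' := Finset.mem_Icc.mp hj
            rw [hQo j (by omega) (by omega)]
          rw [heq]; exact hfeas.2 k hk1 hkK
        · rw [hki]
          have hmem : i ∈ Finset.Icc 1 i := Finset.mem_Icc.mpr ⟨hi1, le_refl i⟩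
          rw [sum_diff_one hmem (fun j => Q j * (t j - t (j - 1)))
              (fun j => Pstar j * (t j - t (j - 1)))
              (fun j hj hji => by
                have hj' := Finset.mem_Icc.mp hj
                simp only [hQo j hji (by omega)])]
          beta_reduce
          rw [hQi, ← ha_def, ← hli_def]
          have h5 : (a + da) * li - a * li = ε := by
            have e : (a + da) * li - a * li = li * da := by ring
            rw [e, hbala]
          linarith [h5, hεsl, hsl_def]
        · have hmemi : i ∈ Finset.Icc 1 k := Finset.mem_Icc.mpr ⟨hi1, by omega⟩
          have hmemi1 : i + 1 ∈ Finset.Icc 1 k := Finset.mem_Icc.mpr ⟨by omega, by omega⟩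
          rw [sum_diff_two (by omega) hmemi hmemi1 (fun j => Q j * (t j - t (j - 1)))
              (fun j => Pstar j * (t j - t (j - 1)))
              (fun j hj h1 h2 => by simp only [hQo j h1 h2])]
          beta_reduce
          rw [hQi, hQi1, hii, ← ha_def, ← hb_def, ← hli_def, ← hli1_def]
          have h5 : (a + da) * li - a * li + ((b - db) * li1 - b * li1) = 0 := by
            have e : (a + da) * li - a * li + ((b - db) * li1 - b * li1)
                = li * da - li1 * db := by ring
            rw [e, hbala, hbalb]; ring
          linarith [h5, hfeas.2 k hk1 hkK]
    have hgain : SThroughput K0 K t Pstar < SThroughput K0 K t Q := by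
      unfold SThroughput
      have hmemi : i ∈ Finset.Icc 1 (K + 1) := Finset.mem_Icc.mpr ⟨hi1, by omega⟩
      have hmemi1 : i + 1 ∈ Finset.Icc 1 (K + 1) := Finset.mem_Icc.mpr ⟨by omega, by omega⟩
      rw [sum_diff_two (by omega) hmemi hmemi1 (fun j => (t j - t (j - 1)) * gfun K0 (Q j))
          (fun j => (t j - t (j - 1)) * gfun K0 (Pstar j))
          (fun j hj h1 h2 => by simp only [hQo j h1 h2])]
      beta_reduce
      rw [hQi, hQi1, hii, ← ha_def, ← hb_def, ← hli_def, ← hli1_def]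
      have hkey := key hK0 hli hli1 ha hda hdb hord (hbala.trans hbalb.symm)
      linarith [hkey]
    exact absurd (hopt Q hQfeas) (not_le.mpr hgain)
  · -- b < a : move ε of energy from epoch i to epoch i+1
    have hgab : gap = a - b := by rw [hgap_def, abs_of_pos (by linarith : (0:ℝ) < a - b)]
    set Q : ℕ → ℝ := fun j => if j = i then a - da else if j = i + 1 then b + db else Pstar j
      with hQ_def
    have hQi : Q i = a - da := by simp [hQ_def]
    have hQi1 : Q (i + 1) = b + db := by simp [hQ_def]
    have hQo : ∀ j, j ≠ i → j ≠ i + 1 → Q j = Pstar j := by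
      intro j h1 h2; simp [hQ_def, h1, h2]
    have hord : b + db < a - da := by rw [hgab] at hda4 hdb4; linarith
    have hQfeas : SFeas K t E Q := by
      constructor
      · intro j hj1 hjK
        by_cases h1 : j = i
        · rw [h1, hQi]
          have hga : gap ≤ a := by rw [hgab]; linarith
          rw [hgab] at hda4; linarith
        by_cases h2 : j = i + 1
        · rw [h2, hQi1]; linarith
        · rw [hQo j h1 h2]; exact hfeas.1 j hj1 hjK
      · intro k hk1 hkK
        rcases lt_trichotomy k i with hki | hki | hki
        · have heq : ∑ j ∈ Finset.Icc 1 k, Q j * (t j - t (j - 1))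
              = ∑ j ∈ Finset.Icc 1 k, Pstar j * (t j - t (j - 1)) := by
            apply Finset.sum_congr rfl
            intro j hj
            have hj' := Finset.mem_Icc.mp hj
            rw [hQo j (by omega) (by omega)]
          rw [heq]; exact hfeas.2 k hk1 hkK
        · rw [hki]
          have hmem : i ∈ Finset.Icc 1 i := Finset.mem_Icc.mpr ⟨hi1, le_refl i⟩
          rw [sum_diff_one hmem (fun j => Q j * (t j - t (j - 1)))
              (fun j => Pstar j * (t j - t (j - 1)))
              (fun j hj hji => by
                have hj' := Finset.mem_Icc.mp hj
                simp only [hQo j hji (by omega)])]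
          beta_reduce
          rw [hQi, ← ha_def, ← hli_def]
          have h5 : (a - da) * li - a * li = -ε := by
            have e : (a - da) * li - a * li = -(li * da) := by ring
            rw [e, hbala]
          linarith [h5, hfeas.2 i hi1 (by omega : i ≤ K + 1), hε]
        · have hmemi : i ∈ Finset.Icc 1 k := Finset.mem_Icc.mpr ⟨hi1, by omega⟩
          have hmemi1 : i + 1 ∈ Finset.Icc 1 k := Finset.mem_Icc.mpr ⟨by omega, by omega⟩
          rw [sum_diff_two (by omega) hmemi hmemi1 (fun j => Q j * (t j - t (j - 1)))
              (fun j => Pstar j * (t j - t (j - 1)))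
              (fun j hj h1 h2 => by simp only [hQo j h1 h2])]
          beta_reduce
          rw [hQi, hQi1, hii, ← ha_def, ← hb_def, ← hli_def, ← hli1_def]
          have h5 : (a - da) * li - a * li + ((b + db) * li1 - b * li1) = 0 := by
            have e : (a - da) * li - a * li + ((b + db) * li1 - b * li1)
                = li1 * db - li * da := by ring
            rw [e, hbala, hbalb]; ring
          linarith [h5, hfeas.2 k hk1 hkK]
    have hgain : SThroughput K0 K t Pstar < SThroughput K0 K t Q := by
      unfold SThroughput
      have hmemi : i ∈ Finset.Icc 1 (K + 1) := Finset.mem_Icc.mpr ⟨hi1, by omega⟩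
      have hmemi1 : i + 1 ∈ Finset.Icc 1 (K + 1) := Finset.mem_Icc.mpr ⟨by omega, by omega⟩
      rw [sum_diff_two (by omega) hmemi hmemi1 (fun j => (t j - t (j - 1)) * gfun K0 (Q j))
          (fun j => (t j - t (j - 1)) * gfun K0 (Pstar j))
          (fun j hj h1 h2 => by simp only [hQo j h1 h2])]
      beta_reduce
      rw [hQi, hQi1, hii, ← ha_def, ← hb_def, ← hli_def, ← hli1_def]
      have hkey := key hK0 hli1 hli hb hdb hda hord (hbalb.trans hbala.symm)
      linarith [hkey]
    exact absurd (hopt Q hQfeas) (not_le.mpr hgain)
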